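/- Fix ε > 0, a_ε = (√(1+4ε) − 1)/2, μ_ε(s) = max{s(1−s)+ε, ε}, and let f_ε be the regularized potential. Then for every s ∈ (0,1) one has |f_ε'(s)| ≤ |f'(s)|, where f'(s) = log(s/(1−s)) is the derivative of the logarithmic potential f(s) = s log s + (1−s) log(1−s). Equivalently, |log((a_ε + s)/(1 + a_ε − s))| ≤ |log(s/(1−s))| for every s ∈ (0,1). -/

import Mathlib

/-- on `(0,1)` the regularized potential derivative is dominated by
the logarithmic potential derivative: `|f_ε'(s)| ≤ |f'(s)| = |log(s/(1−s))|`. -/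
theorem regularized_potential_derivative_dominated (ε : ℝ) (hε : 0 < ε)
    (aε : ℝ) (haε : aε = (Real.sqrt (1 + 4 * ε) - 1) / 2)
    (με : ℝ → ℝ) (hμε : ∀ s : ℝ, με s = max (s * (1 - s) + ε) ε)
    (fε : ℝ → ℝ) (hreg : ContDiff ℝ 2 fε)
    (hf'' : ∀ s : ℝ, deriv (deriv fε) s = (1 + 2 * aε) / με s)
    (hf' : deriv fε (1/2) = 0) (hf : fε (1/2) = - Real.log 2) :
    ∀ s ∈ Set.Ioo (0:ℝ) 1,
      |deriv fε s| ≤ |Real.log (s / (1 - s))| ∧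
      |Real.log ((aε + s) / (1 + aε - s))| ≤ |Real.log (s / (1 - s))| := by
  -- basic facts about aε
  have hsq : Real.sqrt (1 + 4 * ε) ^ 2 = 1 + 4 * ε := Real.sq_sqrt (by linarith)
  have ha_pos : 0 < aε := by
    rw [haε]
    have : (1:ℝ) < Real.sqrt (1 + 4 * ε) := by
      nlinarith [Real.sqrt_nonneg (1 + 4 * ε)]
    linarith
  have hkey : aε ^ 2 + aε = ε := by
    rw [haε]; nlinarith [Real.sqrt_nonneg (1 + 4 * ε)]
  -- the candidate derivative
  set g : ℝ → ℝ := fun s => Real.log (aε + s) - Real.log (1 + aε - s) with hg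
  -- g has the right derivative on (0,1)
  have hgd : ∀ s ∈ Set.Ioo (0:ℝ) 1, HasDerivAt g ((1 + 2 * aε) / με s) s := by
    intro s hs
    obtain ⟨hs0, hs1⟩ := hs
    have h1 : (0:ℝ) < aε + s := by linarith
    have h2 : (0:ℝ) < 1 + aε - s := by linarith
    have d1 : HasDerivAt (fun s => Real.log (aε + s)) (1 / (aε + s)) s := by
      have := (Real.hasDerivAt_log h1.ne').comp s ((hasDerivAt_id s).const_add aε)
      simpa [one_div, Function.comp_def] using this
    have d2 : HasDerivAt (fun s => Real.log (1 + aε - s)) (-(1 / (1 + aε - s))) s := by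
      have := (Real.hasDerivAt_log h2.ne').comp s
        (((hasDerivAt_id s).const_sub (1 + aε)))
      simpa [one_div, Function.comp_def] using this
    have := d1.sub d2
    refine this.congr_deriv ?_
    have hμ : με s = s * (1 - s) + ε := by
      rw [hμε]; exact max_eq_left (by nlinarith)
    rw [hμ]
    have : s * (1 - s) + ε = (aε + s) * (1 + aε - s) := by nlinarith
    rw [this]
    field_simp
    ring
  -- deriv fε is differentiable with derivative (1+2aε)/με
  have hd1 : Differentiable ℝ (deriv fε) := by
    have h2 : ContDiff ℝ ((1:ℕ)+1) fε := by norm_num; exact hreg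
    exact (contDiff_succ_iff_deriv.mp h2).2.2.differentiable (by norm_num)
  -- deriv fε = g on (0,1)
  have heq : ∀ s ∈ Set.Ioo (0:ℝ) 1, deriv fε s = g s := by
    have hconv : Convex ℝ (Set.Ioo (0:ℝ) 1) := convex_Ioo 0 1
    have hderiv : ∀ x ∈ Set.Ioo (0:ℝ) 1, HasDerivAt (fun s => deriv fε s - g s) 0 x := by
      intro x hx
      have hfd : HasDerivAt (deriv fε) ((1 + 2 * aε) / με x) x := by
        have := (hd1 x).hasDerivAt
        rwa [hf'' x] at this
      simpa [Pi.sub_def] using hfd.sub (hgd x hx)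
    have hhalf : (1/2 : ℝ) ∈ Set.Ioo (0:ℝ) 1 := by norm_num
    intro s hs
    have hconst := hconv.is_const_of_fderivWithin_eq_zero
      (f := fun s => deriv fε s - g s)
      (fun x hx => ((hderiv x hx).differentiableAt).differentiableWithinAt)
      (fun x hx => by
        rw [fderivWithin_eq_fderiv ((isOpen_Ioo.uniqueDiffOn) x hx)
          ((hderiv x hx).differentiableAt)]
        ext t
        simp [(hderiv x hx).deriv, ← toSpanSingleton_deriv]) hs hhalf
    have hg0 : g (1/2) = 0 := by simp [hg]; ring_nf
    simp only [hf', hg0] at hconst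
    linarith [hconst]
  -- the pure inequality
  have hineq : ∀ s ∈ Set.Ioo (0:ℝ) 1,
      |Real.log ((aε + s) / (1 + aε - s))| ≤ |Real.log (s / (1 - s))| := by
    intro s hs
    obtain ⟨hs0, hs1⟩ := hs
    have h1 : (0:ℝ) < aε + s := by linarith
    have h2 : (0:ℝ) < 1 + aε - s := by linarith
    have hA : (0:ℝ) < (aε + s) / (1 + aε - s) := div_pos h1 h2
    have hB : (0:ℝ) < s / (1 - s) := div_pos hs0 (by linarith)
    rcases le_total s (1/2) with hc | hc
    · -- A ≤ 1 and B ≤ A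
      have hA1 : (aε + s) / (1 + aε - s) ≤ 1 := by
        rw [div_le_one h2]; linarith
      have hBA : s / (1 - s) ≤ (aε + s) / (1 + aε - s) := by
        rw [div_le_div_iff₀ (by linarith) h2]; nlinarith
      rw [abs_of_nonpos (Real.log_nonpos hA.le hA1),
        abs_of_nonpos (Real.log_nonpos hB.le (by rw [div_le_one (by linarith)]; linarith))]
      exact neg_le_neg (Real.log_le_log hB hBA)
    · have hA1 : (1:ℝ) ≤ (aε + s) / (1 + aε - s) := by
        rw [le_div_iff₀ h2]; linarith
      have hAB : (aε + s) / (1 + aε - s) ≤ s / (1 - s) := by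
        rw [div_le_div_iff₀ h2 (by linarith)]; nlinarith
      rw [abs_of_nonneg (Real.log_nonneg hA1),
        abs_of_nonneg (Real.log_nonneg (by rw [le_div_iff₀ (by linarith)]; linarith))]
      exact Real.log_le_log hA hAB
  intro s hs
  refine ⟨?_, hineq s hs⟩
  obtain ⟨hs0, hs1⟩ := hs
  have h1 : (aε + s) ≠ 0 := by positivity
  have h2 : (1 + aε - s) ≠ 0 := by nlinarith
  rw [heq s ⟨hs0, hs1⟩]
  simp only [hg]
  rw [← Real.log_div h1 h2]
  exact hineq s ⟨hs0, hs1⟩
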